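/- Let (ξ_i)_{i∈ℕ₀} be a Markov chain on a finite set P with transition matrix (p_{i,j}), let (S_i)_{i∈ℕ} be i.i.d. nonnegative random variables independent of (ξ_i), let μ > 1 and λ : P × P → ℝ, and suppose max_{i∈P} ∑_{j∈P} μ p_{i,j} E[e^{-λ(j,i) S_1}] ≤ θ for some θ ∈ [0,1). Define W_k = ∏_{i=0}^{k-1} μ e^{-λ(ξ_{i+1}, ξ_i) S_{i+1}}. Then E[W_ν] ≤ θ^ν for every ν ∈ ℕ. -/

import Mathlib

open MeasureTheory ProbabilityTheory Filter

/-- Helper: per-index exponent coefficient along a path. -/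
def cf {ι : Type*} (ν : ℕ) (lam : ι → ι → ℝ) (x : Fin (ν+1) → ι) : ℕ → ℝ := fun m =>
  if h : m - 1 < ν then -lam (x ⟨m - 1 + 1, by omega⟩) (x ⟨m - 1, by omega⟩)
  else -lam (x 0) (x 0)

lemma cf_form {ι : Type*} (ν : ℕ) (lam : ι → ι → ℝ) (x : Fin (ν+1) → ι) (m : ℕ) :
    ∃ a b, cf ν lam x m = -lam a b := by
  unfold cf
  by_cases h : m - 1 < ν
  · exact ⟨_, _, by rw [dif_pos h]⟩
  · exact ⟨_, _, by rw [dif_neg h]⟩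

lemma cf_succ_nat {ι : Type*} (ν : ℕ) (lam : ι → ι → ℝ) (x : Fin (ν+1) → ι) (i : ℕ)
    (h : i < ν) :
    cf ν lam x (i+1) = -lam (x ⟨i+1, by omega⟩) (x ⟨i, by omega⟩) := by
  unfold cf
  simp only [Nat.add_sub_cancel]
  rw [dif_pos h]

lemma cf_succ_fin {ι : Type*} (ν : ℕ) (lam : ι → ι → ℝ) (x : Fin (ν+1) → ι) (i : Fin ν) :
    cf ν lam x ((i : ℕ) + 1) = -lam (x i.succ) (x i.castSucc) := by
  rw [cf_succ_nat ν lam x i i.isLt]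
  congr 1

/-- iid-style product formula: integrability and factorization of the integral of a
product of functions of the independent variables `S (i+1)`, `i < n`. -/
lemma aux_prod_shift {Ω : Type*} [MeasurableSpace Ω] (P : Measure Ω) [IsProbabilityMeasure P]
    (S : ℕ → Ω → ℝ) (hSmeas : ∀ i, Measurable (S i))
    (hSindep : iIndepFun S P)
    (d : ℕ → ℝ) (hi : ∀ i, Integrable (fun ω => Real.exp (d i * S i ω)) P) :
    ∀ n : ℕ,
      Integrable (fun ω => ∏ i ∈ Finset.range n, Real.exp (d (i+1) * S (i+1) ω)) P ∧
      (∫ ω, ∏ i ∈ Finset.range n, Real.exp (d (i+1) * S (i+1) ω) ∂P)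
        = ∏ i ∈ Finset.range n, ∫ ω, Real.exp (d (i+1) * S (i+1) ω) ∂P := by
  classical
  -- the composed family
  set F : ℕ → Ω → ℝ := fun m ω => Real.exp (d m * S m ω) with hF
  have hFmeas : ∀ m, Measurable (F m) := fun m =>
    Real.measurable_exp.comp ((hSmeas m).const_mul (d m))
  have hFindep : iIndepFun F P :=
    hSindep.comp (fun m t => Real.exp (d m * t))
      (fun m => Real.measurable_exp.comp (measurable_id.const_mul (d m)))
  intro n
  induction n with
  | zero => simp
  | succ n ih =>
    have hnot : n + 1 ∉ (Finset.range n).image (· + 1) := by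
      simp only [Finset.mem_image, Finset.mem_range]
      rintro ⟨m, hm, hmeq⟩; omega
    have hIndep : IndepFun (∏ m ∈ (Finset.range n).image (· + 1), F m) (F (n+1)) P :=
      hFindep.indepFun_finsetProd_of_notMem hFmeas hnot
    have hprodeq : (∏ m ∈ (Finset.range n).image (· + 1), F m)
        = fun ω => ∏ i ∈ Finset.range n, Real.exp (d (i+1) * S (i+1) ω) := by
      funext ω
      rw [Finset.prod_apply, Finset.prod_image (by intro a _ b _ h; simpa using h)]
    rw [hprodeq] at hIndep
    have hint1 : Integrable (fun ω => ∏ i ∈ Finset.range n,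
        Real.exp (d (i+1) * S (i+1) ω)) P := ih.1
    have hmul : Integrable (fun ω => (∏ i ∈ Finset.range n,
        Real.exp (d (i+1) * S (i+1) ω)) * Real.exp (d (n+1) * S (n+1) ω)) P :=
      hIndep.integrable_mul hint1 (hi (n+1))
    constructor
    · simpa [Finset.prod_range_succ] using hmul
    · have := hIndep.integral_fun_mul_eq_mul_integral hint1.1 (hi (n+1)).1
      simp only [Finset.prod_range_succ]
      rw [← ih.2]
      exact hIndep.integral_fun_mul_eq_mul_integral hint1.1 (hi (n+1)).1



lemma aux_markov_step {Ω : Type*} [MeasurableSpace Ω] (P : Measure Ω) [IsProbabilityMeasure P]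
    {ι : Type*} [Fintype ι] [DecidableEq ι] [MeasurableSpace ι] [MeasurableSingletonClass ι]
    (ξ : ℕ → Ω → ι) (hξmeas : ∀ i, Measurable (ξ i))
    (p : ι → ι → ℝ)
    (hmarkov : ∀ (i : ℕ) (b : ι),
      P[(fun ω => Set.indicator {ω' | ξ (i + 1) ω' = b} (fun _ => (1 : ℝ)) ω)|
          MeasurableSpace.comap (fun ω (k : Fin (i + 1)) => ξ k ω) inferInstance]
        =ᵐ[P] fun ω => p (ξ i ω) b)
    (n : ℕ) (x : Fin (n+1) → ι) (b : ι) :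
    (P ({ω | ∀ k : Fin (n+1), ξ k ω = x k} ∩ {ω | ξ (n+1) ω = b})).toReal
      = (P {ω | ∀ k : Fin (n+1), ξ k ω = x k}).toReal * p (x (Fin.last n)) b := by
  classical
  have hΞ : Measurable (fun ω (k : Fin (n + 1)) => ξ k ω) :=
    measurable_pi_lambda _ fun k => hξmeas k
  have hm : MeasurableSpace.comap (fun ω (k : Fin (n + 1)) => ξ k ω) inferInstance
      ≤ ‹MeasurableSpace Ω› := measurable_iff_comap_le.mp hΞ
  haveI : SigmaFinite (P.trim hm) := by
    have : IsFiniteMeasure (P.trim hm) := isFiniteMeasure_trim hm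
    infer_instance
  set A : Set Ω := {ω | ∀ k : Fin (n+1), ξ k ω = x k} with hAdef
  have hAm : MeasurableSet[MeasurableSpace.comap (fun ω (k : Fin (n + 1)) => ξ k ω)
      inferInstance] A := by
    refine ⟨{x}, measurableSet_singleton x, ?_⟩
    ext ω
    simp [A, funext_iff, eq_comm]
  have hA : MeasurableSet A := hm _ hAm
  set B : Set Ω := {ω' | ξ (n+1) ω' = b} with hBdef
  have hB : MeasurableSet B := hξmeas (n+1) (measurableSet_singleton b)
  have hf : Integrable (fun ω => Set.indicator B (fun _ => (1:ℝ)) ω) P :=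
    (integrable_const (1:ℝ)).indicator hB
  have h1 : ∫ ω in A, Set.indicator B (fun _ => (1:ℝ)) ω ∂P = (P (A ∩ B)).toReal := by
    rw [setIntegral_indicator hB, setIntegral_const, smul_eq_mul, mul_one]
    rfl
  have h2 : ∫ ω in A, Set.indicator B (fun _ => (1:ℝ)) ω ∂P
      = ∫ ω in A, p (ξ n ω) b ∂P := by
    rw [← setIntegral_condExp hm hf hAm]
    refine setIntegral_congr_ae hA ?_
    filter_upwards [hmarkov n b] with ω hω _ using hω
  have h3 : ∫ ω in A, p (ξ n ω) b ∂P = ∫ ω in A, p (x (Fin.last n)) b ∂P := by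
    refine setIntegral_congr_fun hA ?_
    intro ω hω
    have := hω (Fin.last n)
    simp only [Fin.val_last] at this
    simp [this]
  rw [← h1, h2, h3, setIntegral_const, smul_eq_mul, mul_comm]
  exact mul_comm _ _

lemma aux_key {Ω : Type*} [MeasurableSpace Ω] (P : Measure Ω) [IsProbabilityMeasure P]
    {ι : Type*} [Fintype ι] [DecidableEq ι] [MeasurableSpace ι] [MeasurableSingletonClass ι]
    (ξ : ℕ → Ω → ι) (hξmeas : ∀ i, Measurable (ξ i))
    (p : ι → ι → ℝ)
    (hmarkov : ∀ (i : ℕ) (b : ι),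
      P[(fun ω => Set.indicator {ω' | ξ (i + 1) ω' = b} (fun _ => (1 : ℝ)) ω)|
          MeasurableSpace.comap (fun ω (k : Fin (i + 1)) => ξ k ω) inferInstance]
        =ᵐ[P] fun ω => p (ξ i ω) b)
    (μ : ℝ) (G : ι → ι → ℝ) (hG0 : ∀ a b, 0 ≤ μ * G a b)
    (θ : ℝ) (hθ0 : 0 ≤ θ)
    (hbound : ∀ a, ∑ b, μ * p a b * G b a ≤ θ)
    (hmstep : ∀ (n : ℕ) (x : Fin (n+1) → ι) (b : ι),
      (P ({ω | ∀ k : Fin (n+1), ξ k ω = x k} ∩ {ω | ξ (n+1) ω = b})).toReal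
        = (P {ω | ∀ k : Fin (n+1), ξ k ω = x k}).toReal * p (x (Fin.last n)) b) :
    ∀ n : ℕ,
      ∑ x : Fin (n+1) → ι, (P {ω | ∀ k : Fin (n+1), ξ k ω = x k}).toReal *
        ∏ i : Fin n, (μ * G (x i.succ) (x i.castSucc)) ≤ θ ^ n := by
  classical
  intro n
  induction n with
  | zero =>
    simp only [pow_zero, Finset.univ_eq_empty, Finset.prod_empty, mul_one]
    have hmeas : ∀ x : Fin 1 → ι, MeasurableSet {ω | ∀ k : Fin 1, ξ (k : ℕ) ω = x k} := by
      intro x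
      have hE : {ω | ∀ k : Fin 1, ξ (k : ℕ) ω = x k} = ⋂ k : Fin 1, (ξ (k : ℕ)) ⁻¹' {x k} := by
        ext ω; simp
      rw [hE]
      exact MeasurableSet.iInter fun k => hξmeas _ (measurableSet_singleton _)
    have hdisj : Pairwise (Function.onFun Disjoint
        (fun x : Fin 1 → ι => {ω | ∀ k : Fin 1, ξ (k : ℕ) ω = x k})) := by
      intro x y hxy
      refine Set.disjoint_left.mpr fun ω hx hy => hxy ?_
      funext k; rw [← hx k, hy k]
    have hcover : (⋃ x : Fin 1 → ι, {ω | ∀ k : Fin 1, ξ (k : ℕ) ω = x k}) = Set.univ := by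
      ext ω; simp only [Set.mem_iUnion, Set.mem_univ, iff_true]
      exact ⟨fun k => ξ (k : ℕ) ω, fun k => rfl⟩
    have hsum : ∑ x : Fin 1 → ι, P {ω | ∀ k : Fin 1, ξ (k : ℕ) ω = x k} = 1 := by
      rw [← tsum_fintype (L := .unconditional _), ← measure_iUnion hdisj hmeas, hcover, measure_univ]
    refine le_of_eq ?_
    calc ∑ x : Fin 1 → ι, (P {ω | ∀ k : Fin 1, ξ (k : ℕ) ω = x k}).toReal
        = (∑ x : Fin 1 → ι, P {ω | ∀ k : Fin 1, ξ (k : ℕ) ω = x k}).toReal :=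
          (ENNReal.toReal_sum fun _ _ => measure_ne_top P _).symm
      _ = 1 := by rw [hsum]; simp
  | succ n ih =>
    -- reindex paths of length n+2 by (paths of length n+1) × (last state)
    let e : ((Fin (n+1) → ι) × ι) ≃ (Fin (n+2) → ι) :=
      { toFun := fun yb => Fin.snoc yb.1 yb.2
        invFun := fun x => (fun k => x k.castSucc, x (Fin.last (n+1)))
        left_inv := fun yb => by
          ext k
          · simp [Fin.snoc_castSucc]
          · simp [Fin.snoc_last]
        right_inv := fun x => by
          funext k
          induction k using Fin.lastCases with
          | last => simp [Fin.snoc_last]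
          | cast j => simp [Fin.snoc_castSucc] }
    rw [← Equiv.sum_comp e
      (fun x : Fin (n+2) → ι => (P {ω | ∀ k : Fin (n+2), ξ k ω = x k}).toReal *
        ∏ i : Fin (n+1), (μ * G (x i.succ) (x i.castSucc))), Fintype.sum_prod_type]
    have he : ∀ (y : Fin (n+1) → ι) (b : ι), e (y, b) = Fin.snoc y b := fun y b => rfl
    have hterm : ∀ (y : Fin (n+1) → ι) (b : ι),
        (P {ω | ∀ k : Fin (n+2), ξ k ω = e (y, b) k}).toReal *
          ∏ i : Fin (n+1), (μ * G (e (y, b) i.succ) (e (y, b) i.castSucc))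
        = ((P {ω | ∀ k : Fin (n+1), ξ k ω = y k}).toReal *
            ∏ i : Fin n, (μ * G (y i.succ) (y i.castSucc))) *
          (μ * p (y (Fin.last n)) b * G b (y (Fin.last n))) := by
      intro y b
      have hev : {ω | ∀ k : Fin (n+2), ξ k ω = e (y, b) k}
          = {ω | ∀ k : Fin (n+1), ξ k ω = y k} ∩ {ω | ξ (n+1) ω = b} := by
        ext ω
        simp only [Set.mem_setOf_eq, Set.mem_inter_iff]
        constructor
        · intro h
          refine ⟨fun k => ?_, ?_⟩
          · have := h k.castSucc
            simpa [he, Fin.snoc_castSucc, Fin.coe_castSucc] using this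
          · have := h (Fin.last (n+1))
            simpa [he, Fin.snoc_last, Fin.val_last] using this
        · rintro ⟨h1, h2⟩ k
          induction k using Fin.lastCases with
          | last => simpa [he, Fin.snoc_last, Fin.val_last] using h2
          | cast j => simpa [he, Fin.snoc_castSucc, Fin.coe_castSucc] using h1 j
      have hprod : ∏ i : Fin (n+1), (μ * G (e (y, b) i.succ) (e (y, b) i.castSucc))
          = (∏ i : Fin n, (μ * G (y i.succ) (y i.castSucc))) *
              (μ * G b (y (Fin.last n))) := by
        rw [Fin.prod_univ_castSucc]
        congr 1
        · refine Finset.prod_congr rfl fun j _ => ?_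
          rw [Fin.succ_castSucc]
          simp only [he, Fin.snoc_castSucc]
        · rw [Fin.succ_last]
          simp [he, Fin.snoc_last, Fin.snoc_castSucc]
      rw [hev, hprod, hmstep n y b]
      ring
    calc ∑ y : Fin (n+1) → ι, ∑ b : ι,
          (P {ω | ∀ k : Fin (n+2), ξ k ω = e (y, b) k}).toReal *
            ∏ i : Fin (n+1), (μ * G (e (y, b) i.succ) (e (y, b) i.castSucc))
        = ∑ y : Fin (n+1) → ι, ((P {ω | ∀ k : Fin (n+1), ξ k ω = y k}).toReal *
            ∏ i : Fin n, (μ * G (y i.succ) (y i.castSucc))) *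
            ∑ b : ι, (μ * p (y (Fin.last n)) b * G b (y (Fin.last n))) := by
          refine Finset.sum_congr rfl fun y _ => ?_
          rw [Finset.mul_sum]
          exact Finset.sum_congr rfl fun b _ => hterm y b
      _ ≤ ∑ y : Fin (n+1) → ι, ((P {ω | ∀ k : Fin (n+1), ξ k ω = y k}).toReal *
            ∏ i : Fin n, (μ * G (y i.succ) (y i.castSucc))) * θ := by
          refine Finset.sum_le_sum fun y _ => ?_
          refine mul_le_mul_of_nonneg_left (hbound _) ?_
          exact mul_nonneg ENNReal.toReal_nonneg (Finset.prod_nonneg fun i _ => hG0 _ _)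
      _ = (∑ y : Fin (n+1) → ι, (P {ω | ∀ k : Fin (n+1), ξ k ω = y k}).toReal *
            ∏ i : Fin n, (μ * G (y i.succ) (y i.castSucc))) * θ := by
          rw [← Finset.sum_mul]
      _ ≤ θ ^ n * θ := mul_le_mul_of_nonneg_right ih hθ0
      _ = θ ^ (n+1) := by ring
theorem markov_product_geometric_decay {Ω : Type*} [MeasurableSpace Ω]
    (P : Measure Ω) [IsProbabilityMeasure P]
    {ι : Type*} [Fintype ι] [DecidableEq ι] [MeasurableSpace ι] [MeasurableSingletonClass ι]
    (ξ : ℕ → Ω → ι) (S : ℕ → Ω → ℝ)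
    (hξmeas : ∀ i, Measurable (ξ i)) (hSmeas : ∀ i, Measurable (S i))
    (p : ι → ι → ℝ) (hp0 : ∀ a b, 0 ≤ p a b) (hp1 : ∀ a, ∑ b, p a b = 1)
    -- Markov property: the conditional law of `ξ (i+1)` given `ξ 0, …, ξ i` is `p (ξ i) ·`
    (hmarkov : ∀ (i : ℕ) (b : ι),
      P[(fun ω => Set.indicator {ω' | ξ (i + 1) ω' = b} (fun _ => (1 : ℝ)) ω)|
          MeasurableSpace.comap (fun ω (k : Fin (i + 1)) => ξ k ω) inferInstance]
        =ᵐ[P] fun ω => p (ξ i ω) b)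
    (hSnn : ∀ i ω, 0 ≤ S i ω)
    (hSindep : iIndepFun S P)
    (hSident : ∀ i, IdentDistrib (S i) (S 1) P P)
    (hindep : IndepFun (fun ω i => ξ i ω) (fun ω i => S i ω) P)
    (μ : ℝ) (hμ : 1 < μ) (lam : ι → ι → ℝ)
    (hint : ∀ a b, Integrable (fun ω => Real.exp (-lam a b * S 1 ω)) P)
    (θ : ℝ) (hθ0 : 0 ≤ θ) (hθ1 : θ < 1)
    (hbound : ∀ a : ι, ∑ b, μ * p a b * ∫ ω, Real.exp (-lam b a * S 1 ω) ∂P ≤ θ) :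
    ∀ ν : ℕ,
      (∫ ω, ∏ i ∈ Finset.range ν,
          (μ * Real.exp (-lam (ξ (i + 1) ω) (ξ i ω) * S (i + 1) ω)) ∂P) ≤ θ ^ ν := by
  classical
  intro ν
  have hμ0 : (0:ℝ) < μ := lt_trans one_pos hμ
  -- integrability of the individual exponentials, along any path
  have hintc : ∀ (x : Fin (ν+1) → ι) (m : ℕ),
      Integrable (fun ω => Real.exp (cf ν lam x m * S m ω)) P := by
    intro x m
    obtain ⟨a, b, hab⟩ := cf_form ν lam x m
    have hu : Measurable fun t : ℝ => Real.exp (cf ν lam x m * t) :=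
      Real.measurable_exp.comp (measurable_id.const_mul _)
    refine ((hSident m).comp hu).integrable_iff.mpr ?_
    simpa [Function.comp_def, hab] using hint a b
  have hEmeas : ∀ x : Fin (ν+1) → ι,
      MeasurableSet {ω | ∀ k : Fin (ν+1), ξ (k : ℕ) ω = x k} := by
    intro x
    have hE : {ω | ∀ k : Fin (ν+1), ξ (k : ℕ) ω = x k}
        = ⋂ k : Fin (ν+1), (ξ (k : ℕ)) ⁻¹' {x k} := by ext ω; simp
    rw [hE]; exact MeasurableSet.iInter fun k => hξmeas _ (measurableSet_singleton _)
  -- Step 1: pointwise decomposition over paths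
  have hW : ∀ ω, (∏ i ∈ Finset.range ν,
        (μ * Real.exp (-lam (ξ (i + 1) ω) (ξ i ω) * S (i + 1) ω)))
      = ∑ x : Fin (ν+1) → ι,
          Set.indicator {ω' | ∀ k : Fin (ν+1), ξ (k : ℕ) ω' = x k} (fun _ => (1:ℝ)) ω *
          (μ^ν * ∏ i ∈ Finset.range ν, Real.exp (cf ν lam x (i+1) * S (i+1) ω)) := by
    intro ω
    refine Eq.symm ((Finset.sum_eq_single_of_mem (fun k : Fin (ν+1) => ξ (k : ℕ) ω)
      (Finset.mem_univ _) ?_).trans ?_)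
    · intro x _ hx
      have hnm : ω ∉ {ω' | ∀ k : Fin (ν+1), ξ (k : ℕ) ω' = x k} := by
        intro h
        exact hx (funext fun k => (h k).symm)
      rw [Set.indicator_of_notMem hnm, zero_mul]
    · have hmem : ω ∈ {ω' | ∀ k : Fin (ν+1),
          ξ (k : ℕ) ω' = (fun k : Fin (ν+1) => ξ (k : ℕ) ω) k} := fun k => rfl
      rw [Set.indicator_of_mem hmem, one_mul]
      rw [Finset.prod_mul_distrib, Finset.prod_const, Finset.card_range]
      congr 1
      refine Finset.prod_congr rfl fun i hi => ?_
      rw [Finset.mem_range] at hi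
      rw [cf_succ_nat ν lam _ i hi]
  -- Step 2: integrability of each summand
  have hsummand : ∀ x : Fin (ν+1) → ι,
      Integrable (fun ω =>
        Set.indicator {ω' | ∀ k : Fin (ν+1), ξ (k : ℕ) ω' = x k} (fun _ => (1:ℝ)) ω *
        (μ^ν * ∏ i ∈ Finset.range ν, Real.exp (cf ν lam x (i+1) * S (i+1) ω))) P := by
    intro x
    refine Integrable.bdd_mul (c := 1) ?_ ?_ ?_
    · exact ((aux_prod_shift P S hSmeas hSindep (cf ν lam x) (hintc x) ν).1).const_mul _
    · exact (measurable_const.indicator (hEmeas x)).aestronglyMeasurable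
    · refine ae_of_all _ fun ω => ?_
      by_cases h : ω ∈ {ω' | ∀ k : Fin (ν+1), ξ (k : ℕ) ω' = x k}
      · rw [Set.indicator_of_mem h]; simp
      · rw [Set.indicator_of_notMem h]; simp
  -- Step 3+4: compute the integral
  have hfact : ∀ x : Fin (ν+1) → ι,
      (∫ ω, Set.indicator {ω' | ∀ k : Fin (ν+1), ξ (k : ℕ) ω' = x k} (fun _ => (1:ℝ)) ω *
          (μ^ν * ∏ i ∈ Finset.range ν, Real.exp (cf ν lam x (i+1) * S (i+1) ω)) ∂P)
        = (P {ω | ∀ k : Fin (ν+1), ξ (k : ℕ) ω = x k}).toReal *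
          ∏ i : Fin ν, (μ * ∫ ω, Real.exp (-lam (x i.succ) (x i.castSucc) * S 1 ω) ∂P) := by
    intro x
    have hprod := aux_prod_shift P S hSmeas hSindep (cf ν lam x) (hintc x) ν
    have hφm : Measurable (Set.indicator {y : ℕ → ι | ∀ k : Fin (ν+1), y (k : ℕ) = x k}
        (fun _ => (1:ℝ))) := by
      refine Measurable.indicator measurable_const ?_
      have hY : {y : ℕ → ι | ∀ k : Fin (ν+1), y (k : ℕ) = x k}
          = ⋂ k : Fin (ν+1), (fun y : ℕ → ι => y (k : ℕ)) ⁻¹' {x k} := by ext y; simp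
      rw [hY]
      exact MeasurableSet.iInter fun k => (measurable_pi_apply _) (measurableSet_singleton _)
    have hψm : Measurable (fun s : ℕ → ℝ =>
        μ^ν * ∏ i ∈ Finset.range ν, Real.exp (cf ν lam x (i+1) * s (i+1))) := by
      refine Measurable.const_mul ?_ _
      refine Finset.measurable_prod _ fun i _ => ?_
      exact Real.measurable_exp.comp ((measurable_pi_apply (i+1)).const_mul _)
    have hIndep := hindep.comp hφm hψm
    have heq := hIndep.integral_fun_mul_eq_mul_integral
      ((hφm.comp (measurable_pi_lambda _ hξmeas)).aestronglyMeasurable)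
      ((hψm.comp (measurable_pi_lambda _ hSmeas)).aestronglyMeasurable)
    have hL : (∫ ω, Set.indicator {ω' | ∀ k : Fin (ν+1), ξ (k : ℕ) ω' = x k}
          (fun _ => (1:ℝ)) ω *
          (μ^ν * ∏ i ∈ Finset.range ν, Real.exp (cf ν lam x (i+1) * S (i+1) ω)) ∂P)
        = (∫ ω, Set.indicator {ω' | ∀ k : Fin (ν+1), ξ (k : ℕ) ω' = x k}
            (fun _ => (1:ℝ)) ω ∂P) *
          ∫ ω, μ^ν * ∏ i ∈ Finset.range ν, Real.exp (cf ν lam x (i+1) * S (i+1) ω) ∂P := heq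
    rw [hL]
    congr 1
    · have hid : (fun ω => Set.indicator {ω' | ∀ k : Fin (ν+1), ξ (k : ℕ) ω' = x k}
          (fun _ => (1:ℝ)) ω) = fun ω => Set.indicator
          {ω' | ∀ k : Fin (ν+1), ξ (k : ℕ) ω' = x k} (1 : Ω → ℝ) ω := rfl
      rw [hid]
      exact integral_indicator_one (hEmeas x)
    · rw [integral_const_mul, hprod.2]
      rw [Finset.prod_mul_distrib, Finset.prod_const, Finset.card_univ, Fintype.card_fin]
      congr 1
      rw [← Fin.prod_univ_eq_prod_range
        (fun i => ∫ ω, Real.exp (cf ν lam x (i+1) * S (i+1) ω) ∂P) ν]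
      refine Finset.prod_congr rfl fun i _ => ?_
      have hu : Measurable fun t : ℝ => Real.exp (cf ν lam x ((i : ℕ)+1) * t) :=
        Real.measurable_exp.comp (measurable_id.const_mul _)
      calc (∫ ω, Real.exp (cf ν lam x ((i : ℕ)+1) * S ((i : ℕ)+1) ω) ∂P)
          = ∫ ω, Real.exp (cf ν lam x ((i : ℕ)+1) * S 1 ω) ∂P :=
            ((hSident ((i : ℕ)+1)).comp hu).integral_eq
        _ = ∫ ω, Real.exp (-lam (x i.succ) (x i.castSucc) * S 1 ω) ∂P := by
            rw [cf_succ_fin]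
  -- assemble
  calc (∫ ω, ∏ i ∈ Finset.range ν,
        (μ * Real.exp (-lam (ξ (i + 1) ω) (ξ i ω) * S (i + 1) ω)) ∂P)
      = ∫ ω, ∑ x : Fin (ν+1) → ι,
          Set.indicator {ω' | ∀ k : Fin (ν+1), ξ (k : ℕ) ω' = x k} (fun _ => (1:ℝ)) ω *
          (μ^ν * ∏ i ∈ Finset.range ν, Real.exp (cf ν lam x (i+1) * S (i+1) ω)) ∂P := by
        exact integral_congr_ae (Filter.Eventually.of_forall hW)
    _ = ∑ x : Fin (ν+1) → ι,
          ∫ ω, Set.indicator {ω' | ∀ k : Fin (ν+1), ξ (k : ℕ) ω' = x k} (fun _ => (1:ℝ)) ω *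
          (μ^ν * ∏ i ∈ Finset.range ν, Real.exp (cf ν lam x (i+1) * S (i+1) ω)) ∂P :=
        integral_finset_sum _ (fun x _ => hsummand x)
    _ = ∑ x : Fin (ν+1) → ι, (P {ω | ∀ k : Fin (ν+1), ξ (k : ℕ) ω = x k}).toReal *
          ∏ i : Fin ν, (μ * ∫ ω, Real.exp (-lam (x i.succ) (x i.castSucc) * S 1 ω) ∂P) :=
        Finset.sum_congr rfl fun x _ => hfact x
    _ ≤ θ ^ ν := by
        refine aux_key P ξ hξmeas p hmarkov μ
          (fun b a => ∫ ω, Real.exp (-lam b a * S 1 ω) ∂P)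
          (fun a b => mul_nonneg hμ0.le (integral_nonneg fun ω => Real.exp_nonneg _))
          θ hθ0 hbound (fun n x b => aux_markov_step P ξ hξmeas p hmarkov n x b) ν
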